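/- A signed graph Σ = (G, σ) with connected underlying simple graph G is balanced if and only if the adjacency matrices A(Σ) and A(G) have the same spectrum (equal characteristic polynomials). -/

import Mathlib

open SimpleGraph

/-- The sign (product of edge signs) of a walk in a graph, computed along its darts. -/
def walkSign {V : Type*} {G : SimpleGraph V} (σ : V → V → ℤ) {u v : V} (p : G.Walk u v) : ℤ :=
  (p.darts.map fun d => σ d.toProd.1 d.toProd.2).prod

/-- `σ` is a signature on `G`: a symmetric function that is `±1`-valued on edges. -/
def IsSignature {V : Type*} (G : SimpleGraph V) (σ : V → V → ℤ) : Prop :=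
  (∀ u v, σ u v = σ v u) ∧ ∀ u v, G.Adj u v → σ u v = 1 ∨ σ u v = -1

/-- A signed graph is balanced when every cycle has sign `+1`. -/
def IsBalanced {V : Type*} (G : SimpleGraph V) (σ : V → V → ℤ) : Prop :=
  ∀ (u : V) (p : G.Walk u u), p.IsCycle → walkSign σ p = 1

/-- A walk is a shortest path when it is a path whose length is the graph distance
between its endpoints. -/
def IsShortestPath {V : Type*} {G : SimpleGraph V} {u v : V} (p : G.Walk u v) : Prop :=
  p.IsPath ∧ p.length = G.dist u v

open scoped Classical in
/-- `σmax u v = +1` if some shortest `u v`-path is positive, `-1` otherwise. -/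
noncomputable def sigmaMax {V : Type*} (G : SimpleGraph V) (σ : V → V → ℤ) (u v : V) : ℤ :=
  if ∃ p : G.Walk u v, IsShortestPath p ∧ walkSign σ p = 1 then 1 else -1

open scoped Classical in
/-- `σmin u v = +1` if all shortest `u v`-paths are positive, `-1` otherwise. -/
noncomputable def sigmaMin {V : Type*} (G : SimpleGraph V) (σ : V → V → ℤ) (u v : V) : ℤ :=
  if ∀ p : G.Walk u v, IsShortestPath p → walkSign σ p = 1 then 1 else -1

/-- The signed distance matrix `D^max`, with `(u,v)` entry `σmax(u,v)·d(u,v)`. -/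
noncomputable def Dmax {V : Type*} (G : SimpleGraph V) (σ : V → V → ℤ) : Matrix V V ℝ :=
  Matrix.of fun u v => (sigmaMax G σ u v : ℝ) * (G.dist u v : ℝ)

/-- The signed distance matrix `D^min`, with `(u,v)` entry `σmin(u,v)·d(u,v)`. -/
noncomputable def Dmin {V : Type*} (G : SimpleGraph V) (σ : V → V → ℤ) : Matrix V V ℝ :=
  Matrix.of fun u v => (sigmaMin G σ u v : ℝ) * (G.dist u v : ℝ)

/-- Two vertices are distance-compatible if all shortest paths between them have the
same sign. -/
def Compatible {V : Type*} (G : SimpleGraph V) (σ : V → V → ℤ) (u v : V) : Prop :=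
  ∀ p q : G.Walk u v, IsShortestPath p → IsShortestPath q → walkSign σ p = walkSign σ q

/-- A signed graph is distance-compatible if every pair of vertices is
distance-compatible. -/
def IsCompatibleGraph {V : Type*} (G : SimpleGraph V) (σ : V → V → ℤ) : Prop :=
  ∀ u v, Compatible G σ u v

/-- The largest eigenvalue of a (symmetric) real matrix: the supremum of the set of real
roots of its characteristic polynomial. -/
noncomputable def largestEigenvalue {n : Type*} [Fintype n] [DecidableEq n]
    (M : Matrix n n ℝ) : ℝ :=
  sSup {x : ℝ | M.charpoly.IsRoot x}

section WalkSign

variable {V : Type*} {G : SimpleGraph V} {σ : V → V → ℤ}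

lemma walkSign_nil {u : V} : walkSign σ (Walk.nil : G.Walk u u) = 1 := rfl

lemma walkSign_cons {u v w : V} (h : G.Adj u v) (p : G.Walk v w) :
    walkSign σ (Walk.cons h p) = σ u v * walkSign σ p := by
  simp [walkSign]

lemma walkSign_append {u v w : V} (p : G.Walk u v) (q : G.Walk v w) :
    walkSign σ (p.append q) = walkSign σ p * walkSign σ q := by
  simp [walkSign, Walk.darts_append]

lemma walkSign_reverse (hσ : ∀ u v, σ u v = σ v u) {u v : V} (p : G.Walk u v) :
    walkSign σ p.reverse = walkSign σ p := by
  simp only [walkSign, Walk.darts_reverse, List.map_reverse, List.prod_reverse, List.map_map]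
  congr 1
  apply List.map_congr_left
  intro d _
  simp only [Function.comp_apply, Dart.symm, Prod.fst_swap, Prod.snd_swap]
  exact (hσ _ _).symm

lemma walkSign_rotate [DecidableEq V] {u v : V} (c : G.Walk v v) (h : u ∈ c.support) :
    walkSign σ (c.rotate u h) = walkSign σ c := by
  unfold walkSign
  exact List.Perm.prod_eq ((Walk.rotate_darts c u h).perm.map _)

lemma walkSign_mul_self (hσ : IsSignature G σ) {u v : V} (p : G.Walk u v) :
    walkSign σ p * walkSign σ p = 1 := by
  induction p with
  | nil => rfl
  | cons h q ih =>
    rw [walkSign_cons]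
    rcases hσ.2 _ _ h with h1 | h1 <;>
      · rw [h1]; ring_nf; ring_nf at ih; linarith [ih]

lemma walkSign_eq_one_or (hσ : IsSignature G σ) {u v : V} (p : G.Walk u v) :
    walkSign σ p = 1 ∨ walkSign σ p = -1 :=
  Int.isUnit_iff.mp ⟨⟨_, _, walkSign_mul_self hσ p, walkSign_mul_self hσ p⟩, rfl⟩

lemma length_eq_one_of_mem_edges {a b : V} (q : G.Walk a b) (hq : q.IsPath)
    (he : s(b, a) ∈ q.edges) : q.length = 1 := by
  induction q with
  | nil => simp at he
  | @cons a c b h r ih =>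
    rw [Walk.cons_isPath_iff] at hq
    rw [Walk.edges_cons, List.mem_cons] at he
    rcases he with he | he
    · rw [Sym2.eq_iff] at he
      rcases he with ⟨rfl, rfl⟩ | ⟨rfl, h2⟩
      · exact absurd rfl h.ne
      · have : r = Walk.nil := (Walk.isPath_iff_eq_nil (p := r)).mp hq.1
        subst this; simp
    · exact absurd (Walk.snd_mem_support_of_mem_edges r he) hq.2

lemma closedWalkSign [DecidableEq V] (hσ : IsSignature G σ) (hb : IsBalanced G σ) :
    ∀ (n : ℕ) (u : V) (p : G.Walk u u), p.length = n → walkSign σ p = 1 := by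
  intro n
  induction n using Nat.strong_induction_on with
  | _ n ih =>
  intro u p hl
  cases p with
  | nil => rfl
  | @cons _ v _ h q =>
    by_cases hnd : (Walk.cons h q).support.tail.Nodup
    · have hqp : q.IsPath := by
        rw [Walk.isPath_def]; simpa [Walk.support_cons] using hnd
      by_cases he : s(u, v) ∈ q.edges
      · have h1 : q.length = 1 := length_eq_one_of_mem_edges q hqp he
        cases q with
        | nil => simp at h1
        | @cons _ w _ h' r =>
          cases r with
          | nil =>
            rw [walkSign_cons, walkSign_cons, walkSign_nil, mul_one, hσ.1 v u]
            rcases hσ.2 u v h with h1 | h1 <;> rw [h1] <;> ring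
          | cons h'' r' => simp at h1
      · exact hb u _ ((Walk.cons_isCycle_iff q h).mpr ⟨hqp, he⟩)
    · -- find repeated vertex in the tail
      rw [List.nodup_iff_count_le_one] at hnd
      push_neg at hnd
      obtain ⟨x, hx⟩ := hnd
      have hx2 : 2 ≤ ((Walk.cons h q).support.tail.count x) := hx
      have hxt : x ∈ (Walk.cons h q).support.tail := List.count_pos_iff.mp (by omega)
      have hxs : x ∈ (Walk.cons h q).support := List.mem_of_mem_tail hxt
      set p : G.Walk u u := Walk.cons h q with hp
      have hrot : walkSign σ (p.rotate x hxs) = walkSign σ p := walkSign_rotate p hxs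
      have hcount : 2 ≤ (p.rotate x hxs).support.tail.count x := by
        rw [List.Perm.count_eq ((Walk.support_rotate p x hxs).perm)]
        exact hx2
      have hlenrot : (p.rotate x hxs).length = n := by
        have h1 := (Walk.rotate_darts p x hxs).perm.length_eq
        rw [Walk.length_darts, Walk.length_darts] at h1
        rw [h1, hp] at *
        exact hl
      rw [← hrot]
      generalize hpr : p.rotate x hxs = p' at *
      cases p' with
      | nil => simp at hcount
      | @cons _ y _ h2 r =>
        have hcr : 2 ≤ r.support.count x := by
          simpa [Walk.support_cons] using hcount
        have hxr : x ∈ r.support := List.count_pos_iff.mp (by omega)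
        have hspec := r.take_spec hxr
        have hone : (r.takeUntil x hxr).support.count x = 1 :=
          r.count_support_takeUntil_eq_one hxr
        have hdroplen : 1 ≤ (r.dropUntil x hxr).length := by
          by_contra hcon
          push_neg at hcon
          have h0 : (r.dropUntil x hxr).length = 0 := by omega
          have hnil : r.dropUntil x hxr = Walk.nil := Walk.nil_iff_eq_nil.mp (Walk.length_eq_zero_iff.mp h0)
          rw [hnil, Walk.append_nil] at hspec
          rw [hspec] at hone
          omega
        have hlens : (r.takeUntil x hxr).length + (r.dropUntil x hxr).length = r.length := by
          have := congrArg Walk.length hspec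
          rwa [Walk.length_append] at this
        have hn : n = r.length + 1 := by
          simpa using hlenrot.symm
        have s1 : walkSign σ (Walk.cons h2 (r.takeUntil x hxr)) = 1 := by
          apply ih ((r.takeUntil x hxr).length + 1) (by omega) x
          simp
        have s2 : walkSign σ (r.dropUntil x hxr) = 1 := by
          apply ih ((r.dropUntil x hxr).length) (by omega) x
          rfl
        calc walkSign σ (Walk.cons h2 r)
            = σ x y * walkSign σ r := walkSign_cons _ _
          _ = σ x y * (walkSign σ (r.takeUntil x hxr) * walkSign σ (r.dropUntil x hxr)) := by
              rw [← walkSign_append, hspec]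
          _ = walkSign σ (Walk.cons h2 (r.takeUntil x hxr)) * walkSign σ (r.dropUntil x hxr) := by
              rw [walkSign_cons]; ring
          _ = 1 := by rw [s1, s2, mul_one]

end WalkSign

open Polynomial Matrix


section MatrixHelpers
variable {n : Type*} [Fintype n] [DecidableEq n] {R : Type*} [CommRing R]

lemma acharya_charmatrix_conj (P M Q : Matrix n n R) (h : P * Q = 1) :
    charmatrix (P * M * Q) = P.map C * charmatrix M * Q.map C := by
  have hscal : P.map C * Matrix.scalar n (X : R[X]) = Matrix.scalar n (X : R[X]) * P.map C :=
    ((Matrix.scalar_commute (X : R[X]) (fun r => Commute.all _ _) (P.map C)).symm).eq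
  rw [charmatrix, charmatrix, RingHom.mapMatrix_apply, RingHom.mapMatrix_apply, mul_sub, sub_mul]
  congr 1
  · rw [hscal, mul_assoc, ← Matrix.map_mul, h, Matrix.map_one _ (map_zero C) (map_one C), mul_one]
  · rw [← Matrix.map_mul, ← Matrix.map_mul]

lemma acharya_charpoly_conj (P M Q : Matrix n n R) (h : P * Q = 1) :
    (P * M * Q).charpoly = M.charpoly := by
  have hQP : Q * P = 1 := mul_eq_one_comm.mp h
  rw [Matrix.charpoly, Matrix.charpoly, acharya_charmatrix_conj P M Q h, det_mul, det_mul,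
    mul_comm, ← mul_assoc, ← det_mul, ← Matrix.map_mul, hQP,
    Matrix.map_one _ (map_zero C) (map_one C), det_one, one_mul]

lemma acharya_conj_pow (P M Q : Matrix n n R) (h : P * Q = 1) (k : ℕ) :
    (P * M * Q) ^ k = P * M ^ k * Q := by
  have hQP : Q * P = 1 := mul_eq_one_comm.mp h
  induction k with
  | zero => simp [h]
  | succ k ih =>
    rw [pow_succ, ih, pow_succ]
    have e1 : P * M ^ k * Q * (P * M * Q) = P * M ^ k * (Q * P) * (M * Q) := by
      simp only [mul_assoc]
    rw [e1, hQP, mul_one]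
    simp only [mul_assoc]

lemma acharya_trace_conj (P M Q : Matrix n n R) (h : P * Q = 1) :
    (P * M * Q).trace = M.trace := by
  have hQP : Q * P = 1 := mul_eq_one_comm.mp h
  rw [Matrix.trace_mul_comm, ← mul_assoc, hQP, one_mul]

lemma acharya_charpoly_diagonal (d : n → R) :
    (Matrix.diagonal d).charpoly = ∏ i : n, (X - C (d i)) := by
  rw [Matrix.charpoly]
  have : charmatrix (Matrix.diagonal d) = Matrix.diagonal fun i => (X : R[X]) - C (d i) := by
    ext i j
    by_cases hij : i = j
    · subst hij; rw [charmatrix_apply_eq, Matrix.diagonal_apply_eq, Matrix.diagonal_apply_eq]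
    · rw [charmatrix_apply_ne _ _ _ hij, Matrix.diagonal_apply_ne _ hij,
        Matrix.diagonal_apply_ne _ hij, map_zero, neg_zero]
  rw [this, det_diagonal]

end MatrixHelpers

section Herm

variable {n : Type*} [Fintype n] [DecidableEq n]

lemma herm_charpoly (M : Matrix n n ℝ) (hM : M.IsHermitian) :
    M.charpoly = ∏ i : n, (X - C (hM.eigenvalues i)) := by
  have hU : (hM.eigenvectorUnitary : Matrix n n ℝ) * star (hM.eigenvectorUnitary : Matrix n n ℝ) = 1 :=
    Matrix.mem_unitaryGroup_iff.mp hM.eigenvectorUnitary.2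
  calc M.charpoly
      = ((hM.eigenvectorUnitary : Matrix n n ℝ) * Matrix.diagonal (RCLike.ofReal ∘ hM.eigenvalues)
          * star (hM.eigenvectorUnitary : Matrix n n ℝ)).charpoly := by
        conv_lhs => rw [hM.spectral_theorem]
        simp only [Unitary.conjStarAlgAut_apply, Unitary.coe_star]
    _ = (Matrix.diagonal (RCLike.ofReal ∘ hM.eigenvalues)).charpoly := acharya_charpoly_conj _ _ _ hU
    _ = ∏ i : n, (X - C (hM.eigenvalues i)) := by
        rw [acharya_charpoly_diagonal]
        simp

lemma herm_trace_pow (M : Matrix n n ℝ) (hM : M.IsHermitian) (k : ℕ) :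
    (M ^ k).trace = ∑ i : n, hM.eigenvalues i ^ k := by
  have hU : (hM.eigenvectorUnitary : Matrix n n ℝ) * star (hM.eigenvectorUnitary : Matrix n n ℝ) = 1 :=
    Matrix.mem_unitaryGroup_iff.mp hM.eigenvectorUnitary.2
  calc (M ^ k).trace
      = (((hM.eigenvectorUnitary : Matrix n n ℝ) * Matrix.diagonal (RCLike.ofReal ∘ hM.eigenvalues)
          * star (hM.eigenvectorUnitary : Matrix n n ℝ)) ^ k).trace := by
        conv_lhs => rw [hM.spectral_theorem]
        simp only [Unitary.conjStarAlgAut_apply, Unitary.coe_star]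
    _ = ((hM.eigenvectorUnitary : Matrix n n ℝ) * (Matrix.diagonal (RCLike.ofReal ∘ hM.eigenvalues)) ^ k
          * star (hM.eigenvectorUnitary : Matrix n n ℝ)).trace := by rw [acharya_conj_pow _ _ _ hU]
    _ = ((Matrix.diagonal (RCLike.ofReal ∘ hM.eigenvalues)) ^ k).trace := acharya_trace_conj _ _ _ hU
    _ = ∑ i : n, hM.eigenvalues i ^ k := by
        rw [Matrix.diagonal_pow, Matrix.trace_diagonal]
        simp

lemma sum_pow_eq_of_charpoly_eq {M N : Matrix n n ℝ} (hM : M.IsHermitian) (hN : N.IsHermitian)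
    (h : M.charpoly = N.charpoly) (k : ℕ) :
    (M ^ k).trace = (N ^ k).trace := by
  rw [herm_trace_pow M hM k, herm_trace_pow N hN k]
  have hroots : (Finset.univ.val.map hM.eigenvalues) = (Finset.univ.val.map hN.eigenvalues) := by
    have h2 := h
    rw [herm_charpoly M hM, herm_charpoly N hN] at h2
    have e1 : ∏ i : n, (X - C (hM.eigenvalues i)) =
        ((Finset.univ.val.map hM.eigenvalues).map fun a => X - C a).prod := by
      rw [Multiset.map_map]; rfl
    have e2 : ∏ i : n, (X - C (hN.eigenvalues i)) =
        ((Finset.univ.val.map hN.eigenvalues).map fun a => X - C a).prod := by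
      rw [Multiset.map_map]; rfl
    rw [e1, e2] at h2
    have := congrArg Polynomial.roots h2
    rwa [Polynomial.roots_multiset_prod_X_sub_C, Polynomial.roots_multiset_prod_X_sub_C] at this
  calc ∑ i : n, hM.eigenvalues i ^ k
      = ((Finset.univ.val.map hM.eigenvalues).map (· ^ k)).sum := by
        rw [Multiset.map_map]; rfl
    _ = ((Finset.univ.val.map hN.eigenvalues).map (· ^ k)).sum := by rw [hroots]
    _ = ∑ i : n, hN.eigenvalues i ^ k := by rw [Multiset.map_map]; rfl

end Herm

section Count
open Finset
variable {V : Type*} [Fintype V] [DecidableEq V] (G : SimpleGraph V) [DecidableRel G.Adj]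
  (σ : V → V → ℤ)

lemma sign_pow_apply (n : ℕ) (u v : V) :
    ((Matrix.of fun u v => if G.Adj u v then (σ u v : ℝ) else 0) ^ n) u v =
      ∑ p ∈ G.finsetWalkLength n u v, (walkSign σ p : ℝ) := by
  induction n generalizing u v with
  | zero =>
    obtain rfl | h := eq_or_ne u v <;>
      simp [finsetWalkLength, Matrix.one_apply, walkSign, *]
  | succ n ih =>
    rw [pow_succ', Matrix.mul_apply]
    have lhs_eq : ∑ w : V, (Matrix.of fun u v => if G.Adj u v then (σ u v : ℝ) else 0) u w *
        ((Matrix.of fun u v => if G.Adj u v then (σ u v : ℝ) else 0) ^ n) w v =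
        ∑ w ∈ univ.filter (G.Adj u ·), (σ u w : ℝ) *
          ∑ p ∈ G.finsetWalkLength n w v, (walkSign σ p : ℝ) := by
      rw [sum_filter]
      apply sum_congr rfl
      intro w _
      by_cases h : G.Adj u w <;> simp [h, ih]
    rw [lhs_eq]
    -- now the RHS
    rw [show G.finsetWalkLength (n+1) u v =
      Finset.univ.biUnion (fun (w : G.neighborSet u) =>
        (G.finsetWalkLength n w v).map ⟨fun p => Walk.cons w.property p, fun _ _ => by intro h; cases h; rfl⟩)
      from rfl]
    rw [Finset.sum_biUnion ?hdisj]
    case hdisj =>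
      rintro ⟨x, hx⟩ - ⟨y, hy⟩ - hxy
      rw [Function.onFun, disjoint_iff_inf_le]
      intro p hp
      simp only [inf_eq_inter, mem_inter, mem_map, Function.Embedding.coeFn_mk] at hp
      obtain ⟨⟨px, _, rfl⟩, ⟨py, hpy, hp⟩⟩ := hp
      cases hp
      simp at hxy
    have rhs_eq : ∀ w : G.neighborSet u,
        ∑ p ∈ (G.finsetWalkLength n (w : V) v).map
            ⟨fun p => Walk.cons w.property p, fun _ _ => by intro h; cases h; rfl⟩, (walkSign σ p : ℝ) =
          (σ u w : ℝ) * ∑ p ∈ G.finsetWalkLength n (w : V) v, (walkSign σ p : ℝ) := by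
      intro w
      rw [Finset.sum_map, Finset.mul_sum]
      apply sum_congr rfl
      intro p _
      show (walkSign σ (Walk.cons w.property p) : ℝ) = _
      exact_mod_cast (walkSign_cons (σ := σ) (show G.Adj u w from w.property) p)
    rw [Finset.sum_congr rfl fun w _ => rhs_eq w]
    exact Finset.sum_subtype (univ.filter (G.Adj u ·)) (fun w => by simp [mem_neighborSet])
      (fun w => (σ u w : ℝ) * ∑ p ∈ G.finsetWalkLength n w v, (walkSign σ p : ℝ))

end Count

/-- Acharya's spectral criterion. A signed graph `(G, σ)` with connected
underlying simple graph is balanced if and only if the adjacency matrices `A(Σ)` and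
`A(G)` have the same spectrum (equal characteristic polynomials). -/
theorem balanced_iff_cospectral {V : Type*} [Fintype V] [DecidableEq V]
    (G : SimpleGraph V) [DecidableRel G.Adj] (σ : V → V → ℤ)
    (hσ : IsSignature G σ) (hG : G.Connected) :
    IsBalanced G σ ↔
      (Matrix.of fun u v => if G.Adj u v then (σ u v : ℝ) else 0).charpoly =
        (G.adjMatrix ℝ).charpoly := by
  set S : Matrix V V ℝ := Matrix.of fun u v => if G.Adj u v then (σ u v : ℝ) else 0 with hSdef
  constructor
  · intro hb
    obtain ⟨u0⟩ := hG.nonempty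
    let P : ∀ v, G.Walk u0 v := fun v => (hG.preconnected u0 v).some
    let θ : V → ℤ := fun v => walkSign σ (P v)
    have hθ2 : ∀ v, θ v * θ v = 1 := fun v => walkSign_mul_self hσ _
    have hedge : ∀ v w, G.Adj v w → σ v w = θ v * θ w := by
      intro v w hvw
      have hc : walkSign σ ((P v).append (Walk.cons hvw (P w).reverse)) = 1 :=
        closedWalkSign hσ hb _ u0 _ rfl
      rw [walkSign_append, walkSign_cons, walkSign_reverse hσ.1] at hc
      calc σ v w = (θ v * θ v) * σ v w * (θ w * θ w) := by rw [hθ2 v, hθ2 w]; ring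
        _ = θ v * (θ v * (σ v w * θ w)) * θ w := by ring
        _ = θ v * 1 * θ w := by rw [hc]
        _ = θ v * θ w := by ring
    have hDD : (Matrix.diagonal fun v => (θ v : ℝ)) * (Matrix.diagonal fun v => (θ v : ℝ)) = 1 := by
      rw [Matrix.diagonal_mul_diagonal]
      have he : (fun i => (θ i : ℝ) * (θ i : ℝ)) = fun _ => (1 : ℝ) := by
        funext v; exact_mod_cast hθ2 v
      rw [he, Matrix.diagonal_one]
    have hSD : S = (Matrix.diagonal fun v => (θ v : ℝ)) * G.adjMatrix ℝ *
        (Matrix.diagonal fun v => (θ v : ℝ)) := by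
      ext u v
      rw [Matrix.mul_diagonal, Matrix.diagonal_mul]
      by_cases h : G.Adj u v
      · simp only [hSdef, Matrix.of_apply, if_pos h, SimpleGraph.adjMatrix_apply]
        rw [hedge u v h]
        push_cast
        ring
      · simp [hSdef, h]
    rw [hSD]
    exact acharya_charpoly_conj _ _ _ hDD
  · intro hchar
    by_contra hnb
    unfold IsBalanced at hnb
    push_neg at hnb
    obtain ⟨u, c, hcyc, hsign⟩ := hnb
    have hsign' : walkSign σ c = -1 := (walkSign_eq_one_or hσ c).resolve_left hsign
    have hSH : S.IsHermitian := by
      unfold Matrix.IsHermitian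
      ext i j
      simp only [Matrix.conjTranspose_apply, hSdef, Matrix.of_apply, star_trivial]
      by_cases h : G.Adj i j
      · rw [if_pos h, if_pos h.symm, hσ.1 j i]
      · rw [if_neg h, if_neg (fun hc => h hc.symm)]
    have hAH : (G.adjMatrix ℝ).IsHermitian := by
      unfold Matrix.IsHermitian
      ext i j
      simp only [Matrix.conjTranspose_apply, SimpleGraph.adjMatrix_apply, star_trivial]
      by_cases h : G.Adj i j
      · rw [if_pos h, if_pos h.symm]
      · rw [if_neg h, if_neg (fun hc => h hc.symm)]
    have htr := sum_pow_eq_of_charpoly_eq hSH hAH hchar c.length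
    have hS_tr : (S ^ c.length).trace =
        ∑ w : V, ∑ p ∈ G.finsetWalkLength c.length w w, (walkSign σ p : ℝ) := by
      unfold Matrix.trace
      apply Finset.sum_congr rfl
      intro w _
      exact sign_pow_apply G σ c.length w w
    have hA_tr : ((G.adjMatrix ℝ) ^ c.length).trace =
        ∑ w : V, ∑ p ∈ G.finsetWalkLength c.length w w, (1 : ℝ) := by
      unfold Matrix.trace
      apply Finset.sum_congr rfl
      intro w _
      show (G.adjMatrix ℝ ^ c.length) w w = _
      rw [SimpleGraph.adjMatrix_pow_apply_eq_card_walk, SimpleGraph.card_set_walk_length_eq]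
      simp
    have hlt : ∑ w : V, ∑ p ∈ G.finsetWalkLength c.length w w, (walkSign σ p : ℝ) <
        ∑ w : V, ∑ p ∈ G.finsetWalkLength c.length w w, (1 : ℝ) := by
      apply Finset.sum_lt_sum
      · intro w _
        apply Finset.sum_le_sum
        intro p _
        rcases walkSign_eq_one_or hσ p with h | h <;> rw [h] <;> norm_num
      · refine ⟨u, Finset.mem_univ u, ?_⟩
        apply Finset.sum_lt_sum
        · intro p _
          rcases walkSign_eq_one_or hσ p with h | h <;> rw [h] <;> norm_num
        · exact ⟨c, SimpleGraph.mem_finsetWalkLength_iff.mpr rfl, by rw [hsign']; norm_num⟩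
    rw [hS_tr, hA_tr] at htr
    exact absurd htr (ne_of_lt hlt)
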